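/- If y ∈ ℕ satisfies y ≥ 2 and a₁ − d ≥ C(y,2) + 1 (where C(y,2) is the binomial coefficient y choose 2), then ω_{a₁−1} ≥ ω_y + ω₁; in particular ⌊ω_{a₁−1}/a₁⌋ ≥ ⌊ω_y/a₁⌋ + ⌊ω₁/a₁⌋ and F > ω_y. -/

import Mathlib

theorem stmt7
    (d : ℕ) (hd : 2 ≤ d)
    (a : Fin d → ℕ)
    (ha_pos : ∀ i, 0 < a i)
    (ha_mono : StrictMono a)
    (ha_gcd : Finset.univ.gcd a = 1)
    (a1 : ℕ) (ha1 : a1 = a ⟨0, by omega⟩)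
    (S : Set ℕ)
    (hS : S = {m : ℕ | ∃ c : Fin d → ℕ, m = ∑ i, c i * a i})
    (hmin : ∀ j : Fin d, ¬ ∃ c : Fin d → ℕ, c j = 0 ∧ a j = ∑ i, c i * a i)
    (F : ℕ) (hF : F ∉ S) (hFmax : ∀ m : ℕ, F < m → m ∈ S)
    (ω : ℕ → ℕ)
    (hω_mono : ∀ i j : ℕ, i < j → j < a1 → ω i < ω j)
    (hω_range : ω '' Set.Iio a1 = {w ∈ S | ¬ ∃ s ∈ S, s + a1 = w})
    (y : ℕ) (hy : 2 ≤ y) (hyd : y.choose 2 + 1 ≤ a1 - d)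
    :
    ω y + ω 1 ≤ ω (a1 - 1) ∧ ω y / a1 + ω 1 / a1 ≤ ω (a1 - 1) / a1 ∧ ω y < F := by
  -- basic facts about S
  have h0S : 0 ∈ S := by rw [hS]; exact ⟨fun _ => 0, by simp⟩
  have hS_add : ∀ u v, u ∈ S → v ∈ S → u + v ∈ S := by
    intro u v hu hv
    rw [hS] at hu hv ⊢
    obtain ⟨c, hc⟩ := hu; obtain ⟨c', hc'⟩ := hv
    exact ⟨fun i => c i + c' i, by simp [add_mul, Finset.sum_add_distrib, hc, hc']⟩
  have hS_gen : ∀ i, a i ∈ S := by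
    intro i
    rw [hS]
    refine ⟨fun j => if j = i then 1 else 0, ?_⟩
    simp [ite_mul]
  have hS_low : ∀ m ∈ S, m ≠ 0 → a1 ≤ m := by
    intro m hm hm0
    rw [hS] at hm
    obtain ⟨c, hc⟩ := hm
    have : ∃ i, c i ≠ 0 := by
      by_contra h
      push_neg at h
      apply hm0
      simp [hc, h]
    obtain ⟨i, hi⟩ := this
    have h1 : c i * a i ≤ m := by
      rw [hc]
      exact Finset.single_le_sum (f := fun i => c i * a i) (fun _ _ => Nat.zero_le _) (Finset.mem_univ i)
    have h2 : a1 ≤ a i := ha1 ▸ ha_mono.monotone (Fin.mk_le_mk.mpr (Nat.zero_le _))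
    have h3 : a i ≤ c i * a i := Nat.le_mul_of_pos_left _ (Nat.pos_of_ne_zero hi)
    omega
  -- Apery set characterization
  have hAp : ∀ w, (∃ k, k < a1 ∧ ω k = w) ↔ (w ∈ S ∧ ¬∃ s ∈ S, s + a1 = w) := by
    intro w
    have := Set.ext_iff.mp hω_range w
    simpa [Set.mem_image, Set.mem_Iio] using this
  have hω_mem : ∀ k, k < a1 → ω k ∈ S ∧ ¬∃ s ∈ S, s + a1 = ω k :=
    fun k hk => (hAp _).mp ⟨k, hk, rfl⟩
  -- numeric bounds
  have hchoose1 : 1 ≤ y.choose 2 := Nat.choose_pos (by omega)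
  have hchoosey : y - 1 ≤ y.choose 2 := by
    rw [Nat.choose_two_right]
    calc y - 1 = 2 * (y - 1) / 2 := by omega
    _ ≤ y * (y - 1) / 2 := Nat.div_le_div_right (Nat.mul_le_mul_right _ hy)
  have ha1d : d + 2 ≤ a1 := by omega
  have hy_lt : y < a1 := by omega
  have ha1pos : 0 < a1 := by omega
  have hω0 : ω 0 = 0 := by
    obtain ⟨k, hk, hωk⟩ := (hAp 0).mpr ⟨h0S, by rintro ⟨s, hs, h⟩; omega⟩
    rcases Nat.eq_zero_or_pos k with h | h
    · exact h ▸ hωk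
    · have := hω_mono 0 k h hk
      omega
  have hω1pos : 0 < ω 1 := by
    have := hω_mono 0 1 (by omega) (by omega)
    omega
  have hω1a1 : a1 < ω 1 := by
    obtain ⟨h1S, h1na⟩ := hω_mem 1 (by omega)
    have h1 : a1 ≤ ω 1 := hS_low _ h1S (by omega)
    rcases Nat.lt_or_ge a1 (ω 1) with h | h
    · exact h
    · exfalso
      exact h1na ⟨0, h0S, by omega⟩
  -- maximum of Apery set is F + a1
  have hωmax : ω (a1 - 1) = F + a1 := by
    obtain ⟨k, hk, hωk⟩ := (hAp (F + a1)).mpr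
      ⟨hFmax _ (by omega), by
        rintro ⟨s, hs, h⟩
        have hsF : s = F := by omega
        exact hF (hsF ▸ hs)⟩
    have hle : ∀ m, m < a1 → ω m ≤ F + a1 := by
      intro m hm
      by_contra h
      push_neg at h
      obtain ⟨hmS, hmna⟩ := hω_mem m hm
      exact hmna ⟨ω m - a1, hFmax _ (by omega), by omega⟩
    have h1 : ω (a1 - 1) ≤ F + a1 := hle _ (by omega)
    have h2 : F + a1 ≤ ω (a1 - 1) := by
      rcases Nat.lt_or_ge k (a1 - 1) with h | h
      · have := hω_mono k (a1 - 1) h (by omega)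
        omega
      · have : k = a1 - 1 := by omega
        rw [← hωk, this]
    omega
  -- key inequality
  have key : ω y + ω 1 ≤ ω (a1 - 1) := by
    by_contra hcon
    push_neg at hcon
    classical
    set A : Finset ℕ := (Finset.range a1).image ω with hA
    have hmemA : ∀ w, w ∈ A ↔ ∃ k, k < a1 ∧ ω k = w := by
      intro w; simp [hA, Finset.mem_image, Finset.mem_range]
    have hAcard : A.card = a1 := by
      rw [hA, Finset.card_image_of_injOn, Finset.card_range]
      intro i hi j hj hij
      simp only [Finset.coe_range, Set.mem_Iio] at hi hj
      rcases lt_trichotomy i j with h | h | h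
      · exact absurd hij (ne_of_lt (hω_mono _ _ h hj))
      · exact h
      · exact absurd hij.symm (ne_of_lt (hω_mono _ _ h hi))
    have hA_le : ∀ w ∈ A, w ≤ ω (a1 - 1) := by
      intro w hw
      obtain ⟨k, hk, hωk⟩ := (hmemA w).mp hw
      rcases Nat.lt_or_ge k (a1 - 1) with h | h
      · have := hω_mono k (a1 - 1) h (by omega)
        omega
      · have hk1 : k = a1 - 1 := by omega
        rw [← hωk, hk1]
    set G : Finset ℕ := Finset.image a Finset.univ with hG
    have hGcard : G.card ≤ d := le_trans Finset.card_image_le (by simp)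
    have ha1G : a1 ∈ G := by
      rw [hG]
      exact Finset.mem_image.mpr ⟨⟨0, by omega⟩, Finset.mem_univ _, ha1.symm⟩
    have ha1A : a1 ∉ A := by
      intro h
      obtain ⟨k, hk, hωk⟩ := (hmemA a1).mp h
      exact ((hAp a1).mp ⟨k, hk, hωk⟩).2 ⟨0, h0S, by omega⟩
    set D : Finset ℕ := A \ insert 0 G with hD
    -- lower bound on card of D
    have hDcard : a1 - d ≤ D.card := by
      have hsub : A ∩ insert 0 G ⊆ insert 0 (G.erase a1) := by
        intro w hw
        rw [Finset.mem_inter, Finset.mem_insert] at hw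
        obtain ⟨hwA, hw0 | hwG⟩ := hw
        · exact Finset.mem_insert.mpr (Or.inl hw0)
        · refine Finset.mem_insert.mpr (Or.inr (Finset.mem_erase.mpr ⟨?_, hwG⟩))
          intro h
          exact ha1A (h ▸ hwA)
      have h1 : (A ∩ insert 0 G).card ≤ d := by
        calc (A ∩ insert 0 G).card ≤ (insert 0 (G.erase a1)).card := Finset.card_le_card hsub
        _ ≤ (G.erase a1).card + 1 := Finset.card_insert_le _ _
        _ = G.card - 1 + 1 := by rw [Finset.card_erase_of_mem ha1G]
        _ ≤ d := by have := Finset.card_pos.mpr ⟨a1, ha1G⟩; omega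
      have h2 := Finset.card_inter_add_card_sdiff A (insert 0 G)
      rw [← hD] at h2
      omega
    -- every element of D decomposes as ω i + ω j with 1 ≤ i ≤ j ≤ y - 1
    have hdec : ∀ w ∈ D, ∃ p : ℕ × ℕ, 1 ≤ p.1 ∧ p.1 ≤ p.2 ∧ p.2 ≤ y - 1 ∧ ω p.1 + ω p.2 = w := by
      intro w hw
      rw [hD, Finset.mem_sdiff, Finset.mem_insert] at hw
      push_neg at hw
      obtain ⟨hwA, hw0, hwG⟩ := hw
      have hwAp := (hAp w).mp ((hmemA w).mp hwA)
      obtain ⟨hwS, hwna⟩ := hwAp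
      rw [hS] at hwS
      obtain ⟨c, hc⟩ := hwS
      have hex : ∃ i0, c i0 ≠ 0 := by
        by_contra h
        push_neg at h
        exact hw0 (by simp [hc, h])
      obtain ⟨i0, hi0⟩ := hex
      -- split off one generator
      set v : ℕ := ∑ i, (Function.update c i0 (c i0 - 1)) i * a i with hv
      have hsplit : a i0 + v = w := by
        rw [hv, hc]
        rw [← Finset.add_sum_erase _ (fun i => (Function.update c i0 (c i0 - 1)) i * a i) (Finset.mem_univ i0),
            ← Finset.add_sum_erase _ (fun i => c i * a i) (Finset.mem_univ i0)]
        have he : ∑ x ∈ Finset.univ.erase i0, (Function.update c i0 (c i0 - 1)) x * a x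
            = ∑ x ∈ Finset.univ.erase i0, c x * a x := by
          apply Finset.sum_congr rfl
          intro x hx
          rw [Function.update_of_ne (Finset.mem_erase.mp hx).1]
        rw [he, Function.update_self]
        have : (c i0 - 1) * a i0 + a i0 = c i0 * a i0 := by
          have : c i0 - 1 + 1 = c i0 := by omega
          calc (c i0 - 1) * a i0 + a i0 = (c i0 - 1 + 1) * a i0 := by ring
          _ = c i0 * a i0 := by rw [this]
        omega
      have hvS : v ∈ S := by rw [hS]; exact ⟨_, hv⟩
      have hvne : v ≠ 0 := by
        intro h
        apply hwG
        rw [hG]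
        exact Finset.mem_image.mpr ⟨i0, Finset.mem_univ _, by omega⟩
      have huAp : ∃ k, k < a1 ∧ ω k = a i0 := by
        rw [hAp]
        refine ⟨hS_gen i0, ?_⟩
        rintro ⟨s, hs, hsa⟩
        exact hwna ⟨s + v, hS_add _ _ hs hvS, by omega⟩
      have hvAp : ∃ k, k < a1 ∧ ω k = v := by
        rw [hAp]
        refine ⟨hvS, ?_⟩
        rintro ⟨s, hs, hsa⟩
        exact hwna ⟨s + a i0, hS_add _ _ hs (hS_gen i0), by omega⟩
      obtain ⟨i, hi, hωi⟩ := huAp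
      obtain ⟨j, hj, hωj⟩ := hvAp
      have hipos : 1 ≤ i := by
        rcases Nat.eq_zero_or_pos i with h | h
        · exfalso; have := ha_pos i0; rw [h, hω0] at hωi; omega
        · exact h
      have hjpos : 1 ≤ j := by
        rcases Nat.eq_zero_or_pos j with h | h
        · exfalso; rw [h, hω0] at hωj; omega
        · exact h
      -- both summands small
      have hbound : ∀ m n, m < a1 → n < a1 → 1 ≤ m → 1 ≤ n → ω m + ω n = w → n ≤ y - 1 := by
        intro m n hm hn hm1 hn1 hmn
        by_contra h
        push_neg at h
        have hyn : y ≤ n := by omega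
        have h1 : ω y ≤ ω n := by
          rcases Nat.lt_or_ge y n with h' | h'
          · exact le_of_lt (hω_mono y n h' hn)
          · have : y = n := by omega
            rw [this]
        have h2 : ω 1 ≤ ω m := by
          rcases Nat.lt_or_ge 1 m with h' | h'
          · exact le_of_lt (hω_mono 1 m h' hm)
          · have : m = 1 := by omega
            rw [this]
        have h3 : w ≤ ω (a1 - 1) := hA_le w hwA
        omega
      rcases le_total i j with hij | hij
      · exact ⟨(i, j), hipos, hij, hbound i j hi hj hipos hjpos (by omega), by simp; omega⟩
      · exact ⟨(j, i), hjpos, hij, hbound j i hj hi hjpos hipos (by omega), by simp; omega⟩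
    -- counting
    set P : Finset (ℕ × ℕ) :=
      (Finset.range y ×ˢ Finset.range y).filter (fun p => 1 ≤ p.1 ∧ p.1 ≤ p.2) with hP
    have hDP : D ⊆ P.image (fun p => ω p.1 + ω p.2) := by
      intro w hw
      obtain ⟨p, hp1, hp2, hp3, hp4⟩ := hdec w hw
      refine Finset.mem_image.mpr ⟨p, ?_, hp4⟩
      rw [hP, Finset.mem_filter, Finset.mem_product, Finset.mem_range, Finset.mem_range]
      exact ⟨⟨by omega, by omega⟩, hp1, hp2⟩
    have hPcard : P.card ≤ y.choose 2 := by
      have := Finset.card_powersetCard 2 (Finset.range y)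
      rw [Finset.card_range] at this
      rw [← this]
      apply Finset.card_le_card_of_injOn (fun p => ({p.1 - 1, p.2} : Finset ℕ))
      · intro p hp
        rw [Finset.mem_coe, hP, Finset.mem_filter, Finset.mem_product, Finset.mem_range, Finset.mem_range] at hp
        obtain ⟨⟨hp1, hp2⟩, hp3, hp4⟩ := hp
        simp only [Finset.mem_coe, Finset.mem_powersetCard]
        constructor
        · intro x hx
          rw [Finset.mem_insert, Finset.mem_singleton] at hx
          rw [Finset.mem_range]
          omega
        · exact Finset.card_pair (by omega)
      · intro p hp q hq hpq0
        have hpq : ({p.1 - 1, p.2} : Finset ℕ) = {q.1 - 1, q.2} := hpq0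
        simp only [hP, Finset.coe_filter, Set.mem_setOf_eq, Finset.mem_product,
          Finset.mem_range] at hp hq
        obtain ⟨⟨hp1, hp2⟩, hp3, hp4⟩ := hp
        obtain ⟨⟨hq1, hq2⟩, hq3, hq4⟩ := hq
        have e1 : p.1 - 1 ∈ ({q.1 - 1, q.2} : Finset ℕ) := by
          rw [← hpq]; exact Finset.mem_insert_self _ _
        have e2 : p.2 ∈ ({q.1 - 1, q.2} : Finset ℕ) := by
          rw [← hpq]; exact Finset.mem_insert.mpr (Or.inr (Finset.mem_singleton_self _))
        have e3 : q.2 ∈ ({p.1 - 1, p.2} : Finset ℕ) := by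
          rw [hpq]; exact Finset.mem_insert.mpr (Or.inr (Finset.mem_singleton_self _))
        rw [Finset.mem_insert, Finset.mem_singleton] at e1 e2 e3
        have : p.1 = q.1 ∧ p.2 = q.2 := by omega
        exact Prod.ext this.1 this.2
    have hfinal : D.card ≤ y.choose 2 :=
      le_trans (Finset.card_le_card hDP) (le_trans Finset.card_image_le hPcard)
    omega
  refine ⟨key, ?_, ?_⟩
  · calc ω y / a1 + ω 1 / a1 ≤ (ω y + ω 1) / a1 := Nat.add_div_le_add_div _ _ _
    _ ≤ ω (a1 - 1) / a1 := Nat.div_le_div_right key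
  · omega
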